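/- For all n ∈ ℕ, all L ≥ 1 and all y ∈ Y, one has Σ_y^L(n + 3^L) ≥ Σ_y^L(n) + 1. Consequently, Σ_y^L(n) ≥ ⌊n/3^L⌋ for all n. -/

import Mathlib

open MeasureTheory Filter Topology
open scoped ENNReal

attribute [local instance] Classical.propDecidable

noncomputable section

/-- The shift map on bi-infinite sequences: `(S x) n = x (n+1)`. -/
def shift {α : Type*} (x : ℤ → α) : ℤ → α := fun n => x (n + 1)

/-- Shift by an arbitrary integer amount `m`. -/
def shiftZ {α : Type*} (m : ℤ) (x : ℤ → α) : ℤ → α := fun n => x (n + m)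

/-- A run structure on a bi-infinite sequence `x`: `t k` is the starting index of the
`k`-th maximal mono-symbol block of `x`, indexed so that block `0` contains position `0`. -/
structure RunStructure (x : ℤ → ℕ) where
  t : ℤ → ℤ
  mono : StrictMono t
  start_nonpos : t 0 ≤ 0
  start_pos : 0 < t 1
  const : ∀ k i : ℤ, t k ≤ i → i < t (k + 1) → x i = x (t k)
  alt : ∀ k : ℤ, x (t (k + 1)) ≠ x (t k)

/-- `d` is the run-length derivative of `x`: `d k` is the length of the `k`-th run. -/
def IsDelta (x d : ℤ → ℕ) : Prop :=
  ∃ r : RunStructure x, ∀ k : ℤ, (d k : ℤ) = r.t (k + 1) - r.t k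

/-- The run-length derivative operator `Δ` (junk value when no derivative exists). -/
def delta (x : ℤ → ℕ) : ℤ → ℕ :=
  if h : ∃ d, IsDelta x d then h.choose else fun _ => 0

/-- A bi-infinite sequence is smooth over `{1,3}` if all its iterated derivatives exist
and take values in `{1,3}`. -/
def SmoothSeq (x : ℤ → ℕ) : Prop :=
  ∀ k : ℕ, ∀ n : ℤ, delta^[k] x n = 1 ∨ delta^[k] x n = 3

/-- The set `X` of bi-infinite smooth sequences over `{1,3}`. -/
def SmoothX : Set (ℤ → ℕ) := {x | SmoothSeq x}

/-- The recoding alphabet: `A = 1`, `B = 3`, `C = 111`, `D = 333`. -/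
inductive ABCD : Type
  | A | B | C | D
deriving DecidableEq

instance : TopologicalSpace ABCD := ⊥
instance : DiscreteTopology ABCD := ⟨rfl⟩
instance : MeasurableSpace ABCD := ⊤

open ABCD

/-- The symbol (1 or 3) of the run encoded by a letter. -/
def sval : ABCD → ℕ
  | A => 1
  | B => 3
  | C => 1
  | D => 3

/-- The length (1 or 3) of the run encoded by a letter; this is also the value of `Δx`
at the corresponding position. -/
def lval : ABCD → ℕ
  | A => 1
  | B => 1
  | C => 3
  | D => 3

/-- `y` is the recoding of `x`: the letter `y k` encodes the `k`-th run of `x`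
(its symbol and its length). -/
def IsRecoding (x : ℤ → ℕ) (y : ℤ → ABCD) : Prop :=
  ∃ r : RunStructure x, ∀ k : ℤ,
    x (r.t k) = sval (y k) ∧ r.t (k + 1) - r.t k = (lval (y k) : ℤ)

/-- The recoding map `rec` (junk value when no recoding exists). -/
def recode (x : ℤ → ℕ) : ℤ → ABCD :=
  if h : ∃ y, IsRecoding x y then h.choose else fun _ => A

/-- The set `Y = rec(X)` of recodings of smooth sequences. -/
def SmoothY : Set (ℤ → ABCD) := recode '' SmoothX

/-- The derivative operator induced on recodings: since `(Δx) i = lval (rec x i)`,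
we have `Δ(rec x) = rec (Δ x) = recode (lval ∘ rec x)`. -/
def deltaY (y : ℤ → ABCD) : ℤ → ABCD := recode fun i => (lval (y i) : ℕ)

/-- `y` is well-aligned: the elementary block of `y` containing coordinate `0` starts
at position `0` (elementary blocks of `y` are exactly the runs of `Δx`, and
`(Δx) i = lval (y i)`). -/
def WellAligned (y : ℤ → ABCD) : Prop := lval (y (-1)) ≠ lval (y 0)

/-- `B_Y^L`: the set of `y ∈ Y` such that `y, Δy, ..., Δ^{L-1} y` are all well-aligned. -/
def BY (L : ℕ) : Set (ℤ → ABCD) :=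
  {y | y ∈ SmoothY ∧ ∀ l < L, WellAligned (deltaY^[l] y)}

/-- `Σ_y^L(n) = #{k ∈ [1,n] : S^k y ∈ B_Y^L}`. -/
def SigY (L : ℕ) (y : ℤ → ABCD) (n : ℕ) : ℕ :=
  ((Finset.Icc 1 n).filter fun k => shift^[k] y ∈ BY L).card

/-- `y` contains an elementary block in `{ABA, DCD}` (for `y ∈ Y`, any such factor is
automatically an elementary block). -/
def HasType0 (y : ℤ → ABCD) : Prop :=
  ∃ i : ℤ, (y i = A ∧ y (i + 1) = B ∧ y (i + 2) = A) ∨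
           (y i = D ∧ y (i + 1) = C ∧ y (i + 2) = D)

/-- `y` contains an elementary block in `{BAB, CDC}`. -/
def HasType1 (y : ℤ → ABCD) : Prop :=
  ∃ i : ℤ, (y i = B ∧ y (i + 1) = A ∧ y (i + 2) = B) ∨
           (y i = C ∧ y (i + 1) = D ∧ y (i + 2) = C)

/-- The type of a recoded sequence: `false` = type 0, `true` = type 1. -/
def typeOf (y : ℤ → ABCD) : Bool := decide (HasType1 y)

/-- The sequence of types of the successive derivatives of a smooth sequence `x`. -/
def TypesX (x : ℤ → ℕ) : ℕ → Bool := fun n => typeOf (recode (delta^[n] x))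

/-- The sequence of types of the successive derivatives of a recoded sequence `y`. -/
def TypesY (y : ℤ → ABCD) : ℕ → Bool := fun n => typeOf (deltaY^[n] y)

/-- `X_τ`: smooth bi-infinite sequences whose type sequence is exactly `τ`. -/
def Xset (τ : ℕ → Bool) : Set (ℤ → ℕ) := {x ∈ SmoothX | TypesX x = τ}

/-- `Y_τ = rec(X_τ)`. -/
def Yset (τ : ℕ → Bool) : Set (ℤ → ABCD) := recode '' Xset τ

/-- A sequence over `{A,B,C,D}` is alternating: no two consecutive symbols in `{A,C}`
and no two consecutive symbols in `{B,D}`. -/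
def Alternating (y : ℤ → ABCD) : Prop := ∀ n : ℤ, sval (y n) ≠ sval (y (n + 1))

/-- The substitutions `φ₀` and `φ₁` on letters. -/
def phiW : Bool → ABCD → List ABCD
  | false, A => [A]
  | false, B => [D]
  | false, C => [A, B, A]
  | false, D => [D, C, D]
  | true, A => [B]
  | true, B => [C]
  | true, C => [B, A, B]
  | true, D => [C, D, C]

/-- `z` is the image of the bi-infinite sequence `y` under the substitution `φ_t`, with
the convention that the image of the letter at position `0` starts at position `0`. -/
def IsSubst (t : Bool) (y z : ℤ → ABCD) : Prop :=
  ∃ u : ℤ → ℤ, u 0 = 0 ∧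
    (∀ k : ℤ, u (k + 1) = u k + (phiW t (y k)).length) ∧
    (∀ k : ℤ, ∀ j : Fin (phiW t (y k)).length, z (u k + (j : ℕ)) = (phiW t (y k)).get j)

/-- The substitution `φ_t` on bi-infinite sequences. -/
def substF (t : Bool) (y : ℤ → ABCD) : ℤ → ABCD :=
  if h : ∃ z, IsSubst t y z then h.choose else y

/-- The composition `φ_{τ₀} ∘ φ_{τ₁} ∘ ⋯ ∘ φ_{τ_{L-1}}`. -/
def substComp (τ : ℕ → Bool) : ℕ → (ℤ → ABCD) → (ℤ → ABCD)
  | 0 => id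
  | L + 1 => substF (τ 0) ∘ substComp (fun n => τ (n + 1)) L

/-- The homographies `h₀` and `h₁`. -/
def hmap : Bool → ℝ × ℝ → ℝ × ℝ
  | false, p => ((1 - p.1) / (3 - 2 * (p.1 + p.2)), (1 / 2 - p.1) / (3 - 2 * (p.1 + p.2)))
  | true, p => ((1 / 2 - p.1) / (3 - 2 * (p.1 + p.2)), (1 - p.1) / (3 - 2 * (p.1 + p.2)))

/-- The square `K = [0,1/2] × [0,1/2]`. -/
def Ksq : Set (ℝ × ℝ) := Set.Icc (0 : ℝ) (1 / 2) ×ˢ Set.Icc (0 : ℝ) (1 / 2)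

/-- The domain `E = {(a,b) ∈ K : a + b ≤ 3/4}`. -/
def Eset : Set (ℝ × ℝ) := {p ∈ Ksq | p.1 + p.2 ≤ 3 / 4}

/-- The composition `h_{t₀} ∘ h_{t₁} ∘ ⋯ ∘ h_{t_L}`. -/
def hComp (t : ℕ → Bool) : ℕ → (ℝ × ℝ → ℝ × ℝ)
  | 0 => hmap (t 0)
  | L + 1 => hComp t L ∘ hmap (t (L + 1))

/-- The point `(a(t), b(t))`, unique point of `⋂_L (h_{t₀} ∘ ⋯ ∘ h_{t_L})(E)`. -/
def abPoint (t : ℕ → Bool) : ℝ × ℝ :=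
  if h : ∃ p : ℝ × ℝ, (⋂ L : ℕ, hComp t L '' Eset) = {p} then h.choose else 0

/-- The number of occurrences of the letter `s` among positions `1, ..., m` of `z`. -/
def letterCount (s : ABCD) (z : ℤ → ABCD) (m : ℕ) : ℕ :=
  ((Finset.Icc 1 m).filter fun k => z (k : ℤ) = s).card

/-- `w` occurs as a factor of `y` at position `i`. -/
def IsFactorAt (w : List ABCD) (y : ℤ → ABCD) (i : ℤ) : Prop :=
  ∀ j : Fin w.length, y (i + (j : ℕ)) = w.get j

/-- The cylinder set `[w]` in `{1,3}^ℤ`. -/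
def cylX (w : List ℕ) : Set (ℤ → ℕ) :=
  {x | ∀ j : Fin w.length, x ((j : ℕ) : ℤ) = w.get j}

/-- The cylinder set `[w]` in `{A,B,C,D}^ℤ`. -/
def cylY (w : List ABCD) : Set (ℤ → ABCD) :=
  {y | ∀ j : Fin w.length, y ((j : ℕ) : ℤ) = w.get j}

/-- The number of occurrences of the finite word `w` in the prefix `x₀ ⋯ x_{n-1}`. -/
def occCount (x : ℤ → ℕ) (w : List ℕ) (n : ℕ) : ℕ :=
  ((Finset.range n).filter fun i =>
    i + w.length ≤ n ∧ ∀ j : Fin w.length, x (((i + (j : ℕ) : ℕ)) : ℤ) = w.get j).card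

/-- A subshift `Z` is minimal if it contains no nonempty proper closed shift-invariant
subset. -/
def ShiftMinimal {α : Type*} [TopologicalSpace α] (Z : Set (ℤ → α)) : Prop :=
  ∀ W : Set (ℤ → α), W ⊆ Z → W.Nonempty → IsClosed W → shift '' W = W → W = Z


namespace RunStructure

variable {x : ℤ → ℕ} (r : RunStructure x)

lemma lt_succ (k : ℤ) : r.t k < r.t (k + 1) := r.mono (by omega)

lemma add_le (k : ℤ) (a : ℕ) : r.t k + a ≤ r.t (k + a) := by
  induction a with
  | zero => simp
  | succ a ih =>
    have h2 := r.lt_succ (k + a)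
    have e : k + ((a : ℤ) + 1) = (k + (a : ℤ)) + 1 := by ring
    push_cast
    rw [e]
    push_cast at ih
    omega

lemma exists_le (n : ℤ) : ∃ k, r.t k ≤ n := by
  refine ⟨-(((r.t 0 - n).toNat : ℤ)), ?_⟩
  have h := r.add_le (-(((r.t 0 - n).toNat : ℤ))) (r.t 0 - n).toNat
  rw [show -(((r.t 0 - n).toNat : ℤ)) + (((r.t 0 - n).toNat : ℤ)) = 0 from by ring] at h
  omega

lemma exists_index (c : ℤ) : ∃ m, r.t m ≤ c ∧ c < r.t (m + 1) := by
  obtain ⟨lb, hlb1, hlb2⟩ := Int.exists_greatest_of_bdd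
    (P := fun z => r.t z ≤ c)
    (by
      refine ⟨max 0 (c - r.t 0), ?_⟩
      intro z hz
      rcases le_or_gt z 0 with h | h
      · exact le_trans h (le_max_left _ _)
      · have h2 := r.add_le 0 z.toNat
        rw [show (0 : ℤ) + ((z.toNat : ℤ)) = z from by omega] at h2
        have : z ≤ c - r.t 0 := by omega
        exact le_trans this (le_max_right _ _))
    (r.exists_le c)

  refine ⟨lb, hlb1, ?_⟩
  by_contra h
  have := hlb2 (lb + 1) (by omega)
  omega

lemma change_iff (i : ℤ) : x (i - 1) ≠ x i ↔ ∃ k, r.t k = i := by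
  constructor
  · intro h
    obtain ⟨m, h1, h2⟩ := r.exists_index (i - 1)
    have hx1 : x (i - 1) = x (r.t m) := r.const m (i - 1) h1 h2
    by_cases hc : i < r.t (m + 1)
    · have hx2 : x i = x (r.t m) := r.const m i (by omega) hc
      exact absurd (hx1.trans hx2.symm) h
    · exact ⟨m + 1, by omega⟩
  · rintro ⟨k, rfl⟩
    have e : k - 1 + 1 = k := by ring
    have h1 : r.t (k - 1) ≤ r.t k - 1 := by
      have := r.lt_succ (k - 1); rw [e] at this; omega
    have h2 : x (r.t k - 1) = x (r.t (k - 1)) := by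
      refine r.const (k - 1) _ h1 ?_
      rw [e]; omega
    have h3 : x (r.t k) ≠ x (r.t (k - 1)) := by
      have := r.alt (k - 1); rw [e] at this; exact this
    intro he
    exact h3 (by rw [← he, h2])

lemma zero_ge (r' : RunStructure x) : r'.t 0 ≤ r.t 0 := by
  obtain ⟨k, hk⟩ := (r.change_iff (r'.t 0)).1 ((r'.change_iff _).2 ⟨0, rfl⟩)
  by_contra h
  have h1 : 0 < k := r.mono.lt_iff_lt.mp (by omega)
  have h2 : r.t 1 ≤ r.t k := r.mono.monotone (by omega)
  have h3 := r.start_pos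
  have h4 := r'.start_nonpos
  omega

lemma succ_ge (r' : RunStructure x) (k : ℤ) (h : r.t k = r'.t k) :
    r'.t (k + 1) ≤ r.t (k + 1) := by
  obtain ⟨k', hk'⟩ := (r'.change_iff (r.t (k + 1))).1 ((r.change_iff _).2 ⟨k + 1, rfl⟩)
  have hgt : r'.t k < r'.t k' := by rw [hk', ← h]; exact r.lt_succ k
  have h1 : k < k' := r'.mono.lt_iff_lt.mp hgt
  have h2 : r'.t (k + 1) ≤ r'.t k' := r'.mono.monotone (by omega)
  omega

lemma pred_le (r' : RunStructure x) (k : ℤ) (h : r.t k = r'.t k) :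
    r.t (k - 1) ≤ r'.t (k - 1) := by
  obtain ⟨k', hk'⟩ := (r'.change_iff (r.t (k - 1))).1 ((r.change_iff _).2 ⟨k - 1, rfl⟩)
  have hlt : r'.t k' < r'.t k := by
    rw [hk', ← h]
    have := r.lt_succ (k - 1); rw [show k - 1 + 1 = k from by ring] at this; omega
  have h1 : k' < k := r'.mono.lt_iff_lt.mp hlt
  have h2 : r'.t k' ≤ r'.t (k - 1) := r'.mono.monotone (by omega)
  omega

lemma t_eq (r' : RunStructure x) (k : ℤ) : r.t k = r'.t k := by
  induction k using Int.induction_on with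
  | zero => exact le_antisymm (r'.zero_ge r) (r.zero_ge r')
  | succ i ih => exact le_antisymm (r'.succ_ge r i ih.symm) (r.succ_ge r' i ih)
  | pred i ih =>
    have h1 := r.pred_le r' (-i) ih
    have h2 := r'.pred_le r (-i) ih.symm
    omega

end RunStructure

lemma isDelta_delta {x : ℤ → ℕ} (h : ∃ d, IsDelta x d) : IsDelta x (delta x) := by
  unfold delta
  rw [dif_pos h]
  exact h.choose_spec

lemma delta_spec {x : ℤ → ℕ} (r : RunStructure x) (k : ℤ) :
    (delta x k : ℤ) = r.t (k + 1) - r.t k := by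
  have hex : ∃ d, IsDelta x d := by
    refine ⟨fun k => (r.t (k + 1) - r.t k).toNat, r, fun k => ?_⟩
    show (((r.t (k + 1) - r.t k).toNat : ℤ)) = r.t (k + 1) - r.t k
    have := r.lt_succ k; omega
  obtain ⟨r0, hr0⟩ := isDelta_delta hex
  rw [hr0 k, r0.t_eq r (k + 1), r0.t_eq r k]

lemma SmoothSeq.mem13 {x : ℤ → ℕ} (hx : SmoothSeq x) (n : ℤ) : x n = 1 ∨ x n = 3 := by
  simpa using hx 0 n

lemma SmoothSeq.delta13 {x : ℤ → ℕ} (hx : SmoothSeq x) (n : ℤ) :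
    delta x n = 1 ∨ delta x n = 3 := by simpa using hx 1 n

lemma SmoothSeq.deltaSmooth {x : ℤ → ℕ} (hx : SmoothSeq x) : SmoothSeq (delta x) := by
  intro k n
  have h := hx (k + 1) n
  rwa [Function.iterate_succ_apply] at h

lemma SmoothSeq.exists_run {x : ℤ → ℕ} (hx : SmoothSeq x) : Nonempty (RunStructure x) := by
  by_contra h
  have hne : ¬ ∃ d, IsDelta x d := by
    rintro ⟨d, r, -⟩
    exact h ⟨r⟩
  have h0 := hx.delta13 0
  unfold delta at h0
  rw [dif_neg hne] at h0
  omega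

/-- The letter with given symbol and length. -/
def letterOf : ℕ → ℕ → ABCD
  | 1, 1 => A
  | 3, 1 => B
  | 1, _ => C
  | _, _ => D

lemma letterOf_spec {s l : ℕ} (hs : s = 1 ∨ s = 3) (hl : l = 1 ∨ l = 3) :
    sval (letterOf s l) = s ∧ lval (letterOf s l) = l := by
  rcases hs with rfl | rfl <;> rcases hl with rfl | rfl <;> simp [letterOf, sval, lval]

lemma abcd_ext {a b : ABCD} (h1 : sval a = sval b) (h2 : lval a = lval b) : a = b := by
  cases a <;> cases b <;> simp_all [sval, lval]

lemma recode_spec {x : ℤ → ℕ} (hx : SmoothSeq x) (r : RunStructure x) (k : ℤ) :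
    x (r.t k) = sval (recode x k) ∧ r.t (k + 1) - r.t k = (lval (recode x k) : ℤ) := by
  obtain ⟨r1⟩ := hx.exists_run
  have hex : ∃ y, IsRecoding x y := by
    refine ⟨fun k => letterOf (x (r1.t k)) (delta x k), r1, fun k => ?_⟩
    obtain ⟨hs, hl⟩ := letterOf_spec (hx.mem13 (r1.t k)) (hx.delta13 k)
    refine ⟨hs.symm, ?_⟩
    rw [hl, ← delta_spec r1 k]
  unfold recode
  rw [dif_pos hex]
  obtain ⟨r2, hr2⟩ := hex.choose_spec
  have ht1 := r2.t_eq r k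
  have ht2 := r2.t_eq r (k + 1)
  obtain ⟨ha, hb⟩ := hr2 k
  exact ⟨by rw [← ht1, ha], by rw [← ht1, ← ht2, hb]⟩

lemma lval_recode {x : ℤ → ℕ} (hx : SmoothSeq x) :
    (fun i => (lval (recode x i) : ℕ)) = delta x := by
  obtain ⟨r⟩ := hx.exists_run
  funext i
  have h1 := (recode_spec hx r i).2
  have h2 := delta_spec r i
  omega

lemma deltaY_recode {x : ℤ → ℕ} (hx : SmoothSeq x) :
    deltaY (recode x) = recode (delta x) := by
  unfold deltaY
  rw [lval_recode hx]

/-- The run structure of a shifted sequence. -/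
def RunStructure.shifted {x : ℤ → ℕ} (r : RunStructure x) {c m : ℤ}
    (h1 : r.t m ≤ c) (h2 : c < r.t (m + 1)) : RunStructure (shiftZ c x) where
  t := fun k => r.t (k + m) - c
  mono := by
    intro a b hab
    show r.t (a + m) - c < r.t (b + m) - c
    have := r.mono (show a + m < b + m by omega)
    omega
  start_nonpos := by
    show r.t (0 + m) - c ≤ 0
    have : (0 : ℤ) + m = m := by ring
    rw [this]; omega
  start_pos := by
    show 0 < r.t (1 + m) - c
    have : (1 : ℤ) + m = m + 1 := by ring
    rw [this]; omega
  const := by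
    intro k i hki hik
    replace hki : r.t (k + m) - c ≤ i := hki
    replace hik : i < r.t (k + 1 + m) - c := hik
    show x (i + c) = x ((r.t (k + m) - c) + c)
    rw [show r.t (k + m) - c + c = r.t (k + m) from by ring]
    refine r.const (k + m) (i + c) (by omega) ?_
    have e : k + 1 + m = k + m + 1 := by ring
    rw [e] at hik
    omega
  alt := by
    intro k
    show x ((r.t (k + 1 + m) - c) + c) ≠ x ((r.t (k + m) - c) + c)
    rw [show r.t (k + 1 + m) - c + c = r.t (k + 1 + m) from by ring,
      show r.t (k + m) - c + c = r.t (k + m) from by ring,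
      show k + 1 + m = k + m + 1 from by ring]
    exact r.alt (k + m)

lemma shifted_t {x : ℤ → ℕ} (r : RunStructure x) {c m : ℤ}
    (h1 : r.t m ≤ c) (h2 : c < r.t (m + 1)) (k : ℤ) :
    (r.shifted h1 h2).t k = r.t (k + m) - c := rfl

lemma delta_shiftZ {x : ℤ → ℕ} (r : RunStructure x) {c m : ℤ}
    (h1 : r.t m ≤ c) (h2 : c < r.t (m + 1)) :
    delta (shiftZ c x) = shiftZ m (delta x) := by
  funext k
  show delta (shiftZ c x) k = delta x (k + m)
  have hs := delta_spec (r.shifted h1 h2) k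
  rw [shifted_t, shifted_t] at hs
  have hd := delta_spec r (k + m)
  rw [show k + 1 + m = k + m + 1 from by ring] at hs
  omega

lemma smooth_shiftZ_aux : ∀ (k : ℕ) (x : ℤ → ℕ), SmoothSeq x → ∀ (c n : ℤ),
    delta^[k] (shiftZ c x) n = 1 ∨ delta^[k] (shiftZ c x) n = 3
  | 0, x, hx, c, n => by simpa [shiftZ] using hx.mem13 (n + c)
  | (k + 1), x, hx, c, n => by
    obtain ⟨r⟩ := hx.exists_run
    obtain ⟨m, h1, h2⟩ := r.exists_index c
    rw [Function.iterate_succ_apply, delta_shiftZ r h1 h2]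
    exact smooth_shiftZ_aux k (delta x) hx.deltaSmooth m n

lemma smooth_shiftZ {x : ℤ → ℕ} (hx : SmoothSeq x) (c : ℤ) : SmoothSeq (shiftZ c x) :=
  fun k n => smooth_shiftZ_aux k x hx c n

lemma shiftZ_recode {x : ℤ → ℕ} (hx : SmoothSeq x) (r : RunStructure x) (m : ℤ) :
    shiftZ m (recode x) = recode (shiftZ (r.t m) x) := by
  have h2 : r.t m < r.t (m + 1) := r.lt_succ m
  have hx' : SmoothSeq (shiftZ (r.t m) x) := smooth_shiftZ hx _
  funext k
  show recode x (k + m) = recode (shiftZ (r.t m) x) k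
  have e1 := recode_spec hx' (r.shifted (le_refl (r.t m)) h2) k
  rw [shifted_t, shifted_t] at e1
  have e2 := recode_spec hx r (k + m)
  refine abcd_ext ?_ ?_
  · rw [← e2.1, ← e1.1]
    show x (r.t (k + m)) = x (r.t (k + m) - r.t m + r.t m)
    rw [show r.t (k + m) - r.t m + r.t m = r.t (k + m) from by ring]
  · have h3 := e1.2
    rw [show k + 1 + m = k + m + 1 from by ring] at h3
    have h4 := e2.2
    omega

lemma shiftZ_recode_memY {x : ℤ → ℕ} (hx : SmoothSeq x) (m : ℤ) :
    shiftZ m (recode x) ∈ SmoothY := by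
  obtain ⟨r⟩ := hx.exists_run
  rw [shiftZ_recode hx r m]
  exact ⟨_, smooth_shiftZ hx _, rfl⟩

lemma deltaY_shiftZ_runstart {x : ℤ → ℕ} (hx : SmoothSeq x)
    (s : RunStructure (delta x)) (j : ℤ) :
    deltaY (shiftZ (s.t j) (recode x)) = shiftZ j (deltaY (recode x)) := by
  obtain ⟨r⟩ := hx.exists_run
  rw [shiftZ_recode hx r (s.t j), deltaY_recode (smooth_shiftZ hx _),
    delta_shiftZ r (le_refl (r.t (s.t j))) (r.lt_succ _),
    ← shiftZ_recode hx.deltaSmooth s j, deltaY_recode hx]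

lemma wellAligned_iff {x : ℤ → ℕ} (hx : SmoothSeq x) (s : RunStructure (delta x)) (m : ℤ) :
    WellAligned (shiftZ m (recode x)) ↔ ∃ j, s.t j = m := by
  have hl : ∀ i, (lval (recode x i) : ℕ) = delta x i := fun i =>
    congrFun (lval_recode hx) i
  have key : WellAligned (shiftZ m (recode x)) ↔ delta x (m - 1) ≠ delta x m := by
    unfold WellAligned
    show lval (recode x (-1 + m)) ≠ lval (recode x (0 + m)) ↔ _
    rw [show (-1 : ℤ) + m = m - 1 from by ring, show (0 : ℤ) + m = m from by ring]
    constructor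
    · intro h he
      exact h (by rw [← Nat.cast_inj (R := ℕ)] at he ⊢; rw [hl, hl]; exact he)
    · intro h he
      exact h (by rw [← hl, ← hl, he])
  rw [key]
  exact s.change_iff m

lemma gap_le_three {x : ℤ → ℕ} (hx : SmoothSeq x) (r : RunStructure x) (k : ℤ) :
    r.t (k + 1) ≤ r.t k + 3 := by
  have h1 := delta_spec r k
  have h2 := hx.delta13 k
  omega

lemma t_le_linear {x : ℤ → ℕ} (hx : SmoothSeq x) (r : RunStructure x) (k : ℤ) (a : ℕ) :
    r.t (k + a) ≤ r.t k + 3 * a := by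
  induction a with
  | zero => simp
  | succ a ih =>
    have h := gap_le_three hx r (k + a)
    have e : k + ((a : ℤ) + 1) = (k + (a : ℤ)) + 1 := by ring
    push_cast
    rw [e]
    push_cast at ih
    omega

lemma main_claim : ∀ (L : ℕ) (x : ℤ → ℕ), SmoothSeq x → ∀ n : ℤ,
    ∃ m : ℤ, n < m ∧ m ≤ n + 3 ^ (L + 1) ∧ shiftZ m (recode x) ∈ BY (L + 1) := by
  intro L
  induction L with
  | zero =>
    intro x hx n
    obtain ⟨s⟩ := hx.deltaSmooth.exists_run
    obtain ⟨j₀, hj1, hj2⟩ := s.exists_index n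
    refine ⟨s.t (j₀ + 1), hj2, ?_, shiftZ_recode_memY hx _, ?_⟩
    · have := gap_le_three hx.deltaSmooth s j₀
      have e : (3 : ℤ) ^ (0 + 1) = 3 := by norm_num
      omega
    · intro l hl
      have : l = 0 := by omega
      subst this
      rw [Function.iterate_zero_apply]
      exact (wellAligned_iff hx s _).2 ⟨j₀ + 1, rfl⟩
  | succ L ih =>
    intro x hx n
    obtain ⟨s⟩ := hx.deltaSmooth.exists_run
    obtain ⟨j₀, hj1, hj2⟩ := s.exists_index n
    obtain ⟨j, hjl, hju, hmem⟩ := ih (delta x) hx.deltaSmooth j₀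
    refine ⟨s.t j, ?_, ?_, shiftZ_recode_memY hx _, ?_⟩
    · have h1 : s.t (j₀ + 1) ≤ s.t j := s.mono.monotone (by omega)
      omega
    · have ha : j = j₀ + ((j - j₀).toNat : ℤ) := by omega
      have hlin := t_le_linear hx.deltaSmooth s j₀ (j - j₀).toNat
      rw [← ha] at hlin
      have hb : ((j - j₀).toNat : ℤ) ≤ 3 ^ (L + 1) := by omega
      have hpow : (3 : ℤ) ^ (L + 1 + 1) = 3 * 3 ^ (L + 1) := by ring
      omega
    · intro l hl
      match l with
      | 0 =>
        rw [Function.iterate_zero_apply]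
        exact (wellAligned_iff hx s _).2 ⟨j, rfl⟩
      | (l' + 1) =>
        rw [Function.iterate_succ_apply, deltaY_shiftZ_runstart hx s j,
          deltaY_recode hx]
        exact hmem.2 l' (by omega)

lemma shift_iterate (y : ℤ → ABCD) (k : ℕ) : shift^[k] y = shiftZ (k : ℤ) y := by
  induction k with
  | zero => funext n; simp [shiftZ]
  | succ k ih =>
    funext n
    rw [Function.iterate_succ_apply', ih]
    show shiftZ (k : ℤ) y (n + 1) = y (n + ((k : ℕ) + 1 : ℕ))
    show y (n + 1 + (k : ℤ)) = _
    exact congrArg y (by push_cast; ring)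

lemma exists_good (L : ℕ) (hL : 1 ≤ L) (y : ℤ → ABCD) (hy : y ∈ SmoothY) (n : ℕ) :
    ∃ k : ℕ, n < k ∧ k ≤ n + 3 ^ L ∧ shift^[k] y ∈ BY L := by
  obtain ⟨x, hx, rfl⟩ := hy
  obtain ⟨L', rfl⟩ : ∃ L', L = L' + 1 := ⟨L - 1, by omega⟩
  obtain ⟨m, h1, h2, h3⟩ := main_claim L' x hx n
  have hc : ((3 ^ (L' + 1) : ℕ) : ℤ) = 3 ^ (L' + 1) := by push_cast; ring
  refine ⟨m.toNat, by omega, by omega, ?_⟩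
  rw [shift_iterate, show ((m.toNat : ℕ) : ℤ) = m from by omega]
  exact h3

/-- Lower bound for `Σ_y^L`.
For all `n ∈ ℕ`, all `L ≥ 1` and all `y ∈ Y`, `Σ_y^L(n + 3^L) ≥ Σ_y^L(n) + 1`;
consequently `Σ_y^L(n) ≥ ⌊n / 3^L⌋`. -/
theorem stmt2 (n L : ℕ) (hL : 1 ≤ L) (y : ℤ → ABCD) (hy : y ∈ SmoothY) :
    SigY L y n + 1 ≤ SigY L y (n + 3 ^ L) ∧ n / 3 ^ L ≤ SigY L y n := by
  have key : ∀ n : ℕ, SigY L y n + 1 ≤ SigY L y (n + 3 ^ L) := by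
    intro n
    obtain ⟨k, hk1, hk2, hk3⟩ := exists_good L hL y hy n
    unfold SigY
    have hsub : (Finset.Icc 1 n).filter (fun k => shift^[k] y ∈ BY L) ⊆
        (Finset.Icc 1 (n + 3 ^ L)).filter (fun k => shift^[k] y ∈ BY L) :=
      Finset.filter_subset_filter _ (Finset.Icc_subset_Icc_right (by omega))
    have hknot : k ∉ (Finset.Icc 1 n).filter (fun k => shift^[k] y ∈ BY L) := by
      simp only [Finset.mem_filter, Finset.mem_Icc]
      rintro ⟨⟨-, h⟩, -⟩
      omega
    have hkin : k ∈ (Finset.Icc 1 (n + 3 ^ L)).filter (fun k => shift^[k] y ∈ BY L) := by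
      simp only [Finset.mem_filter, Finset.mem_Icc]
      exact ⟨⟨by omega, hk2⟩, hk3⟩
    calc ((Finset.Icc 1 n).filter (fun k => shift^[k] y ∈ BY L)).card + 1
        = (insert k ((Finset.Icc 1 n).filter (fun k => shift^[k] y ∈ BY L))).card :=
          (Finset.card_insert_of_notMem hknot).symm
      _ ≤ ((Finset.Icc 1 (n + 3 ^ L)).filter (fun k => shift^[k] y ∈ BY L)).card :=
          Finset.card_le_card (Finset.insert_subset hkin hsub)
  have mono : ∀ a b : ℕ, a ≤ b → SigY L y a ≤ SigY L y b := by
    intro a b hab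
    exact Finset.card_le_card
      (Finset.filter_subset_filter _ (Finset.Icc_subset_Icc_right hab))
  refine ⟨key n, ?_⟩
  have aux : ∀ q : ℕ, q ≤ SigY L y (q * 3 ^ L) := by
    intro q
    induction q with
    | zero => exact Nat.zero_le _
    | succ q ih =>
      have h := key (q * 3 ^ L)
      have e : (q + 1) * 3 ^ L = q * 3 ^ L + 3 ^ L := by ring
      rw [e]
      omega
  calc n / 3 ^ L ≤ SigY L y (n / 3 ^ L * 3 ^ L) := aux _
    _ ≤ SigY L y n := mono _ _ (Nat.div_mul_le_self n _)
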